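/- Let T be a polynomial of degree n ≥ 1 with complex coefficients. Then there exist a unique integer ℓ with 1 ≤ ℓ ≤ n, a unique monic polynomial H of degree 2ℓ with pairwise distinct roots, and a unique polynomial U of degree n − ℓ with the same leading coefficient as T, such that T² − 1 = H · U². Moreover, the roots of H are exactly the roots of T² − 1 of odd multiplicity. -/

import Mathlib

open Polynomial

private lemma pell_not_sq (T U : Polynomial ℂ) (n : ℕ) (hn : 1 ≤ n)
    (hdeg : T.natDegree = n) (h : T ^ 2 - 1 = U ^ 2) : False := by
  have h1 : (T - U) * (T + U) = 1 := by linear_combination h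
  have h2 : T - U ≠ 0 := by
    intro h0; rw [h0, zero_mul] at h1; exact one_ne_zero h1.symm
  have h3 : T + U ≠ 0 := by
    intro h0; rw [h0, mul_zero] at h1; exact one_ne_zero h1.symm
  have h4 : (T - U).natDegree + (T + U).natDegree = 0 := by
    rw [← Polynomial.natDegree_mul h2 h3, h1, natDegree_one]
  have h5 : ((T - U) + (T + U)).natDegree ≤ 0 := by
    refine le_trans (natDegree_add_le _ _) ?_; omega
  have h6 : (T - U) + (T + U) = C 2 * T := by
    rw [map_ofNat]; ring
  rw [h6, natDegree_C_mul (two_ne_zero), hdeg] at h5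
  omega

theorem pell_decomposition_unique (T : Polynomial ℂ) (n : ℕ)
    (hn : 1 ≤ n) (hdeg : T.natDegree = n) :
    ∃! p : ℕ × Polynomial ℂ × Polynomial ℂ,
      1 ≤ p.1 ∧ p.1 ≤ n ∧
      p.2.1.Monic ∧ p.2.1.natDegree = 2 * p.1 ∧ Squarefree p.2.1 ∧
      p.2.2.natDegree = n - p.1 ∧ p.2.2.leadingCoeff = T.leadingCoeff ∧
      T ^ 2 - 1 = p.2.1 * p.2.2 ^ 2 ∧
      (∀ z : ℂ, p.2.1.IsRoot z ↔
        ((T ^ 2 - 1).IsRoot z ∧ Odd ((T ^ 2 - 1).rootMultiplicity z))) := by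
  classical
  set c := T.leadingCoeff with hc_def
  have hT0 : T ≠ 0 := by intro h; rw [h, natDegree_zero] at hdeg; omega
  have hc : c ≠ 0 := leadingCoeff_ne_zero.mpr hT0
  set P := T ^ 2 - 1 with hP_def
  have hT2deg : (T ^ 2).natDegree = 2 * n := by rw [natDegree_pow, hdeg]
  have hPdeg : P.natDegree = 2 * n := by
    rw [hP_def, natDegree_sub_eq_left_of_natDegree_lt, hT2deg]
    rw [natDegree_one, hT2deg]; omega
  have hP0 : P ≠ 0 := by intro h; rw [h, natDegree_zero] at hPdeg; omega
  have hPlc : P.leadingCoeff = c ^ 2 := by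
    have h1 : P.coeff (2 * n) = (T ^ 2).coeff (2 * n) := by
      simp only [hP_def, coeff_sub, coeff_one, if_neg (by omega : ¬ 2 * n = 0)]
      ring
    rw [leadingCoeff, hPdeg, h1, ← hT2deg, coeff_natDegree, leadingCoeff_pow]
  set m : ℂ → ℕ := fun z => P.rootMultiplicity z with hm_def
  set S := P.roots.toFinset with hS_def
  have hsplit : P = C (c ^ 2) * ∏ z ∈ S, (X - C z) ^ m z := by
    conv_lhs => rw [Splits.eq_prod_roots (IsAlgClosed.splits P)]
    rw [hPlc, Finset.prod_multiset_map_count]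
    simp [count_roots, hm_def, hS_def]
  have hsum : ∑ z ∈ S, m z = 2 * n := by
    have h1 := Multiset.toFinset_sum_count_eq P.roots
    have h2 := splits_iff_card_roots.mp (IsAlgClosed.splits P)
    simp only [count_roots] at h1
    rw [hS_def]
    simp only [hm_def]
    rw [h1, h2, hPdeg]
  set O := S.filter (fun z => Odd (m z)) with hO_def
  set Hp := ∏ z ∈ O, (X - C z) with hH_def
  set u := ∑ z ∈ S, m z / 2 with hu_def
  set Up := C c * ∏ z ∈ S, (X - C z) ^ (m z / 2) with hU_def
  have hexp : ∀ z : ℂ, (if Odd (m z) then 1 else 0) + m z / 2 * 2 = m z := by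
    intro z
    rcases Nat.even_or_odd (m z) with h | h
    · rw [if_neg (by simpa [Nat.not_odd_iff_even] using h)]
      have := h.two_dvd
      omega
    · rw [if_pos h]
      have := Nat.odd_iff.mp h
      omega
  have hHfac : Hp = ∏ z ∈ S, (X - C z) ^ (if Odd (m z) then 1 else 0) := by
    rw [hH_def, hO_def, Finset.prod_filter]
    exact Finset.prod_congr rfl fun z hz => by split <;> simp
  have hPfac : P = Hp * Up ^ 2 := by
    rw [hsplit, hHfac, hU_def, mul_pow, ← C_pow, ← Finset.prod_pow, mul_left_comm,
      ← Finset.prod_mul_distrib]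
    congr 1
    refine Finset.prod_congr rfl fun z hz => ?_
    rw [← pow_mul, ← pow_add, hexp z]
  have hHmonic : Hp.Monic := monic_prod_of_monic _ _ fun z _ => monic_X_sub_C z
  have hHdeg : Hp.natDegree = O.card := by
    rw [hH_def, natDegree_prod _ _ fun z _ => X_sub_C_ne_zero z]
    simp [natDegree_X_sub_C]
  have hQmonic : (∏ z ∈ S, (X - C z) ^ (m z / 2)).Monic :=
    monic_prod_of_monic _ _ fun z _ => (monic_X_sub_C z).pow _
  have hUdeg : Up.natDegree = u := by
    rw [hU_def, natDegree_C_mul hc,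
      natDegree_prod _ _ fun z _ => pow_ne_zero _ (X_sub_C_ne_zero z), hu_def]
    simp [natDegree_pow, natDegree_X_sub_C]
  have hUlc : Up.leadingCoeff = c := by
    rw [hU_def, leadingCoeff_mul, leadingCoeff_C, hQmonic.leadingCoeff, mul_one]
  have hcount : O.card + 2 * u = 2 * n := by
    have h1 : ∑ z ∈ S, m z = ∑ z ∈ S, ((if Odd (m z) then 1 else 0) + m z / 2 * 2) :=
      Finset.sum_congr rfl fun z _ => (hexp z).symm
    rw [hsum, Finset.sum_add_distrib, ← Finset.card_filter, ← Finset.sum_mul, ← hO_def,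
      ← hu_def] at h1
    omega
  have hOne : O.Nonempty := by
    rw [Finset.nonempty_iff_ne_empty]
    intro hemp
    have hone : Hp = 1 := by rw [hH_def, hemp, Finset.prod_empty]
    refine pell_not_sq T Up n hn hdeg ?_
    rw [← hP_def, hPfac, hone, one_mul]
  have hOcard : 1 ≤ O.card := hOne.card_pos
  have hu_lt : u < n := by omega
  have hHsf : Squarefree Hp := by
    rw [hH_def, ← PerfectField.separable_iff_squarefree]
    exact Polynomial.separable_prod_X_sub_C_iff'.mpr fun x _ y _ h => h
  have hroot : ∀ z : ℂ, Hp.IsRoot z ↔ (P.IsRoot z ∧ Odd (P.rootMultiplicity z)) := by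
    intro z
    have h1 : Hp.IsRoot z ↔ z ∈ O := by
      rw [hH_def, IsRoot, eval_prod, Finset.prod_eq_zero_iff]
      constructor
      · rintro ⟨w, hw, h⟩
        simp only [eval_sub, eval_X, eval_C, sub_eq_zero] at h
        rwa [h]
      · intro hz; exact ⟨z, hz, by simp⟩
    rw [h1, hO_def, Finset.mem_filter, hS_def, Multiset.mem_toFinset, mem_roots']
    simp only [hm_def]
    tauto
  refine ⟨⟨n - u, Hp, Up⟩, ⟨by omega, by omega, hHmonic, by rw [hHdeg]; omega, hHsf,
    by rw [hUdeg]; omega, hUlc, hPfac, hroot⟩, ?_⟩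
  rintro ⟨l', H', U'⟩ ⟨hl1, hl2, hmon', hdeg', hsf', hUdeg', hUlc', hfac', hroot'⟩
  have hHeq : H' = Hp := by
    have hs1 : H'.roots.Nodup := nodup_roots (PerfectField.separable_iff_squarefree.mpr hsf')
    have hs2 : Hp.roots.Nodup := nodup_roots (PerfectField.separable_iff_squarefree.mpr hHsf)
    have hmem : ∀ a : ℂ, a ∈ H'.roots ↔ a ∈ Hp.roots := by
      intro a
      rw [mem_roots', mem_roots']
      have hiff := (hroot' a).trans (hroot a).symm
      constructor
      · rintro ⟨-, h⟩; exact ⟨hHmonic.ne_zero, hiff.mp h⟩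
      · rintro ⟨-, h⟩; exact ⟨hmon'.ne_zero, hiff.mpr h⟩
    have hre : H'.roots = Hp.roots := (Multiset.Nodup.ext hs1 hs2).mpr hmem
    calc H' = (H'.roots.map fun a => X - C a).prod :=
          Splits.eq_prod_roots_of_monic (IsAlgClosed.splits _) hmon'
      _ = (Hp.roots.map fun a => X - C a).prod := by rw [hre]
      _ = Hp := (Splits.eq_prod_roots_of_monic
            (IsAlgClosed.splits _) hHmonic).symm
  have hleq : l' = n - u := by
    rw [hHeq, hHdeg] at hdeg'
    omega
  have hsq : U' ^ 2 = Up ^ 2 := by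
    have h1 : Hp * U' ^ 2 = Hp * Up ^ 2 := by
      rw [← hHeq, ← hfac', hPfac, hHeq]
    exact mul_left_cancel₀ hHmonic.ne_zero h1
  have hUeq : U' = Up := by
    have hd : (U' - Up) * (U' + Up) = 0 := by linear_combination hsq
    rcases mul_eq_zero.mp hd with h | h
    · exact sub_eq_zero.mp h
    · exfalso
      have hneg : U' = -Up := by linear_combination h
      rw [hneg, leadingCoeff_neg, hUlc] at hUlc'
      exact hc (by linear_combination (-(1 : ℂ) / 2) * hUlc')
  simp only [Prod.mk.injEq]
  exact ⟨hleq, hHeq, hUeq⟩
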